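/- For every a₀ > 0, every A > 0 and every integer M ≥ 2 there exists ε₀ ∈ (0,1) such that: for every ε ∈ (0, ε₀] and every P : ℤ → ℂ satisfying (a) |P(q)| ≤ ε for all q ∈ ℤ, (b) |P(q)| ≤ a₀/q² for all q ≠ 0, and (c) |P(q)| ≤ A · Σ_{n=2}^{M} S(1,n,|P|)(q) for all q ∈ ℤ, one has |P(q)| ≤ ε^{1 + 1/16} for all q ∈ ℤ. -/

import Mathlib

/-- `SconvR P n` is the `n`-fold self-convolution of the real sequence `P : ℤ → ℝ`:
`SconvR P 1 = P` and `SconvR P n = P * SconvR P (n-1)` (convolution on `ℤ`). -/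
noncomputable def SconvR (P : ℤ → ℝ) : ℕ → ℤ → ℝ
  | 0 => fun _ => 0
  | 1 => P
  | (n + 2) => fun q => ∑' k : ℤ, P (q - k) * SconvR P (n + 1) k

lemma SconvR_nonneg (P : ℤ → ℝ) (hP : ∀ q, 0 ≤ P q) : ∀ n q, 0 ≤ SconvR P n q := by
  intro n
  induction n with
  | zero => intro q; simp [SconvR]
  | succ m ih =>
    match m, ih with
    | 0, _ => intro q; simpa [SconvR] using hP q
    | (k+1), ih =>
      intro q
      show 0 ≤ ∑' j : ℤ, P (q - j) * SconvR P (k + 1) j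
      exact tsum_nonneg fun j => mul_nonneg (hP _) (ih j)

lemma SconvR_le (P : ℤ → ℝ) (hP0 : ∀ q, 0 ≤ P q) (hPsum : Summable P)
    (ε : ℝ) (hε : 0 ≤ ε) (hPε : ∀ q, P q ≤ ε) :
    ∀ n q, SconvR P (n + 1) q ≤ ε * (∑' j, P j) ^ n := by
  intro n
  induction n with
  | zero => intro q; simpa [SconvR] using hPε q
  | succ k ih =>
    intro q
    set S := ∑' j, P j with hSdef
    have hS0 : 0 ≤ S := tsum_nonneg hP0
    have hb : Summable (fun j : ℤ => P (q - j)) :=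
      (Equiv.subLeft q).summable_iff.2 hPsum
    have hshift : ∑' j : ℤ, P (q - j) = S := (Equiv.subLeft q).tsum_eq P
    have hrhs : Summable (fun j : ℤ => P (q - j) * (ε * S ^ k)) := hb.mul_right _
    have hle : ∀ j : ℤ, P (q - j) * SconvR P (k + 1) j ≤ P (q - j) * (ε * S ^ k) :=
      fun j => mul_le_mul_of_nonneg_left (ih j) (hP0 _)
    have hlhs : Summable (fun j : ℤ => P (q - j) * SconvR P (k + 1) j) :=
      Summable.of_nonneg_of_le
        (fun j => mul_nonneg (hP0 _) (SconvR_nonneg P hP0 _ j)) hle hrhs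
    calc SconvR P (k + 2) q = ∑' j : ℤ, P (q - j) * SconvR P (k + 1) j := rfl
      _ ≤ ∑' j : ℤ, P (q - j) * (ε * S ^ k) := Summable.tsum_le_tsum hle hlhs hrhs
      _ = (∑' j : ℤ, P (q - j)) * (ε * S ^ k) := tsum_mul_right
      _ = S * (ε * S ^ k) := by rw [hshift]
      _ = ε * S ^ (k + 1) := by ring

theorem stmt8 (a₀ A : ℝ) (ha₀ : 0 < a₀) (hA : 0 < A) (M : ℕ) (hM : 2 ≤ M) :
    ∃ ε₀ ∈ Set.Ioo (0 : ℝ) 1,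
      ∀ ε : ℝ, ε ∈ Set.Ioc (0 : ℝ) ε₀ →
      ∀ P : ℤ → ℂ,
        (∀ q : ℤ, ‖P q‖ ≤ ε) →
        (∀ q : ℤ, q ≠ 0 → ‖P q‖ ≤ a₀ / (q : ℝ) ^ 2) →
        (∀ q : ℤ, ‖P q‖ ≤ A * ∑ n ∈ Finset.Icc 2 M, SconvR (fun j : ℤ => ‖P j‖) n q) →
        ∀ q : ℤ, ‖P q‖ ≤ ε ^ ((1 : ℝ) + 1 / 16) := by
  have hbase : Summable (fun q : ℤ => |(q : ℝ)| ^ (-(3/2 : ℝ))) :=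
    Real.summable_abs_int_rpow (by norm_num)
  set C : ℝ := ∑' q : ℤ, |(q : ℝ)| ^ (-(3/2 : ℝ)) with hCdef
  have hC0 : 0 ≤ C := tsum_nonneg fun q => Real.rpow_nonneg (abs_nonneg _) _
  set D : ℝ := a₀ ^ ((3 : ℝ)/4) * C + 1 with hDdef
  have hD1 : 1 ≤ D := le_add_of_nonneg_left (mul_nonneg (Real.rpow_nonneg ha₀.le _) hC0)
  have hD0 : 0 < D := lt_of_lt_of_le one_pos hD1
  set K : ℝ := max 1 (A * M * D) with hKdef
  have hK1 : 1 ≤ K := le_max_left _ _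
  have hK0 : 0 < K := lt_of_lt_of_le one_pos hK1
  refine ⟨min (1/2) (min (D ^ (-(4:ℝ))) (K ^ (-(16:ℝ)/3))), ⟨?_, ?_⟩, ?_⟩
  · exact lt_min (by norm_num) (lt_min (Real.rpow_pos_of_pos hD0 _) (Real.rpow_pos_of_pos hK0 _))
  · exact lt_of_le_of_lt (min_le_left _ _) (by norm_num)
  intro ε hε P hPε hPdecay hPconv q
  obtain ⟨hε0, hεle⟩ := hε
  have hεhalf : ε ≤ 1/2 := hεle.trans (min_le_left _ _)
  have hε1 : ε ≤ 1 := hεhalf.trans (by norm_num)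
  have hεD : ε ≤ D ^ (-(4:ℝ)) := hεle.trans ((min_le_right _ _).trans (min_le_left _ _))
  have hεK : ε ≤ K ^ (-(16:ℝ)/3) := hεle.trans ((min_le_right _ _).trans (min_le_right _ _))
  set h : ℤ → ℝ := fun j : ℤ => ‖P j‖ with hhdef
  have hh0 : ∀ j, 0 ≤ h j := fun j => norm_nonneg _
  set c : ℝ := ε ^ ((4:ℝ)⁻¹) * a₀ ^ ((3:ℝ)/4) with hcdef
  have hc0 : 0 ≤ c := mul_nonneg (Real.rpow_nonneg hε0.le _) (Real.rpow_nonneg ha₀.le _)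
  -- pointwise bound off zero
  have hpt : ∀ q : ℤ, q ≠ 0 → h q ≤ c * |(q : ℝ)| ^ (-(3/2 : ℝ)) := by
    intro q hq
    have hq2 : (0:ℝ) < (q:ℝ)^2 := by positivity
    have hb0 : 0 ≤ a₀ / (q:ℝ)^2 := div_nonneg ha₀.le hq2.le
    have step1 : h q ≤ ε ^ ((4:ℝ)⁻¹) * (a₀ / (q:ℝ)^2) ^ ((3:ℝ)/4) := by
      have : h q = h q ^ ((4:ℝ)⁻¹) * h q ^ ((3:ℝ)/4) := by
        rw [← Real.rpow_add' (hh0 q) (by norm_num)]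
        norm_num
      rw [this]
      exact mul_le_mul (Real.rpow_le_rpow (hh0 q) (hPε q) (by norm_num))
        (Real.rpow_le_rpow (hh0 q) (hPdecay q hq) (by norm_num))
        (Real.rpow_nonneg (hh0 q) _) (Real.rpow_nonneg hε0.le _)
    have hrw : (a₀ / (q:ℝ)^2) ^ ((3:ℝ)/4) = a₀ ^ ((3:ℝ)/4) * |(q : ℝ)| ^ (-(3/2 : ℝ)) := by
      have e1 : |(q:ℝ)| ^ (2:ℕ) = |(q:ℝ)| ^ ((2:ℕ):ℝ) := (Real.rpow_natCast _ 2).symm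
      rw [(show ((q:ℝ)^2) = |(q:ℝ)|^2 by rw [sq_abs]),
        Real.div_rpow ha₀.le (by positivity), e1,
        ← Real.rpow_mul (abs_nonneg _), Real.rpow_neg (abs_nonneg _), div_eq_mul_inv]
      norm_num
    calc h q ≤ ε ^ ((4:ℝ)⁻¹) * (a₀ / (q:ℝ)^2) ^ ((3:ℝ)/4) := step1
      _ = c * |(q : ℝ)| ^ (-(3/2 : ℝ)) := by rw [hrw, hcdef]; ring
  -- dominating function
  set g : ℤ → ℝ := fun q => c * |(q : ℝ)| ^ (-(3/2 : ℝ)) + (if q = 0 then ε else 0) with hgdef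
  have hg_sum : Summable g := (hbase.mul_left c).add ⟨ε, hasSum_ite_eq (0:ℤ) ε⟩
  have h_le_g : ∀ j, h j ≤ g j := by
    intro j
    by_cases hj : j = 0
    · subst hj
      simp only [hgdef, if_pos rfl]
      have : |((0:ℤ) : ℝ)| ^ (-(3/2 : ℝ)) = 0 := by
        simp [Real.zero_rpow (by norm_num : (-(3/2:ℝ)) ≠ 0)]
      rw [this, mul_zero, zero_add]
      exact hPε 0
    · calc h j ≤ c * |(j : ℝ)| ^ (-(3/2 : ℝ)) := hpt j hj
        _ ≤ g j := by simp [hgdef, hj]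
  have hh_sum : Summable h := Summable.of_nonneg_of_le hh0 h_le_g hg_sum
  set S : ℝ := ∑' j, h j with hSdef
  have hS0 : 0 ≤ S := tsum_nonneg hh0
  have hgsum_eq : ∑' j, g j = c * C + ε := by
    rw [hgdef, Summable.tsum_add (hbase.mul_left c) ⟨ε, hasSum_ite_eq (0:ℤ) ε⟩, tsum_mul_left,
      tsum_ite_eq (0:ℤ) (fun _ => ε), hCdef]
  have hS_le : S ≤ D * ε ^ ((4:ℝ)⁻¹) := by
    have h1 : S ≤ c * C + ε := hgsum_eq ▸ Summable.tsum_le_tsum h_le_g hh_sum hg_sum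
    have h2 : ε ≤ ε ^ ((4:ℝ)⁻¹) := by
      have := Real.rpow_le_rpow_of_exponent_ge hε0 hε1 (by norm_num : ((4:ℝ)⁻¹) ≤ 1)
      rwa [Real.rpow_one] at this
    calc S ≤ c * C + ε := h1
      _ ≤ ε ^ ((4:ℝ)⁻¹) * (a₀ ^ ((3:ℝ)/4) * C) + ε ^ ((4:ℝ)⁻¹) := by
          rw [hcdef]; nlinarith [Real.rpow_nonneg hε0.le ((4:ℝ)⁻¹)]
      _ = D * ε ^ ((4:ℝ)⁻¹) := by rw [hDdef]; ring
  have hεq0 : 0 ≤ ε ^ ((4:ℝ)⁻¹) := Real.rpow_nonneg hε0.le _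
  have hS_le_one : S ≤ 1 := by
    have h3 : ε ^ ((4:ℝ)⁻¹) ≤ (D ^ (-(4:ℝ))) ^ ((4:ℝ)⁻¹) :=
      Real.rpow_le_rpow hε0.le hεD (by norm_num)
    have h4 : (D ^ (-(4:ℝ))) ^ ((4:ℝ)⁻¹) = D⁻¹ := by
      rw [← Real.rpow_mul hD0.le]
      norm_num [Real.rpow_neg_one]
    calc S ≤ D * ε ^ ((4:ℝ)⁻¹) := hS_le
      _ ≤ D * D⁻¹ := by rw [← h4]; exact mul_le_mul_of_nonneg_left h3 hD0.le
      _ = 1 := mul_inv_cancel₀ hD0.ne'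
  -- bound the convolution sum
  have hconv : ∀ n ∈ Finset.Icc 2 M, SconvR h n q ≤ ε * S := by
    intro n hn
    obtain ⟨hn2, hnM⟩ := Finset.mem_Icc.1 hn
    obtain ⟨m, rfl⟩ : ∃ m, n = m + 1 := ⟨n - 1, by omega⟩
    have hm1 : 1 ≤ m := by omega
    have := SconvR_le h hh0 hh_sum ε hε0.le hPε m q
    refine this.trans (mul_le_mul_of_nonneg_left ?_ hε0.le)
    calc S ^ m ≤ S ^ 1 := pow_le_pow_of_le_one hS0 hS_le_one hm1
      _ = S := pow_one S
  have hsum_le : ∑ n ∈ Finset.Icc 2 M, SconvR h n q ≤ (M : ℝ) * (ε * S) := by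
    calc ∑ n ∈ Finset.Icc 2 M, SconvR h n q ≤ ∑ n ∈ Finset.Icc 2 M, (ε * S) :=
          Finset.sum_le_sum hconv
      _ = ((Finset.Icc 2 M).card : ℝ) * (ε * S) := by rw [Finset.sum_const, nsmul_eq_mul]
      _ ≤ (M : ℝ) * (ε * S) := by
          refine mul_le_mul_of_nonneg_right ?_ (mul_nonneg hε0.le hS0)
          have hcard : (Finset.Icc 2 M).card ≤ M := by rw [Nat.card_Icc]; omega
          exact_mod_cast hcard
  -- final computation
  have hmain : ‖P q‖ ≤ K * ε ^ ((5:ℝ)/4) := by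
    have h5 : ε * S ≤ ε * (D * ε ^ ((4:ℝ)⁻¹)) := mul_le_mul_of_nonneg_left hS_le hε0.le
    have h6 : ε * (D * ε ^ ((4:ℝ)⁻¹)) = D * ε ^ ((5:ℝ)/4) := by
      rw [show ((5:ℝ)/4) = 1 + (4:ℝ)⁻¹ by norm_num, Real.rpow_add hε0, Real.rpow_one]
      ring
    have h7 : ‖P q‖ ≤ A * ((M:ℝ) * (ε * S)) :=
      (hPconv q).trans (mul_le_mul_of_nonneg_left hsum_le hA.le)
    calc ‖P q‖ ≤ A * ((M:ℝ) * (ε * S)) := h7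
      _ ≤ A * ((M:ℝ) * (D * ε ^ ((5:ℝ)/4))) := by
          refine mul_le_mul_of_nonneg_left ?_ hA.le
          refine mul_le_mul_of_nonneg_left ?_ (Nat.cast_nonneg _)
          rw [← h6]; exact h5
      _ = (A * M * D) * ε ^ ((5:ℝ)/4) := by ring
      _ ≤ K * ε ^ ((5:ℝ)/4) := by
          refine mul_le_mul_of_nonneg_right (le_max_right _ _)
            (Real.rpow_nonneg hε0.le _)
  have hfin : K * ε ^ ((5:ℝ)/4) ≤ ε ^ ((1:ℝ) + 1/16) := by
    have h8 : ε ^ ((5:ℝ)/4) = ε ^ ((1:ℝ) + 1/16) * ε ^ ((3:ℝ)/16) := by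
      rw [← Real.rpow_add hε0]; norm_num
    have h9 : ε ^ ((3:ℝ)/16) ≤ K⁻¹ := by
      have := Real.rpow_le_rpow hε0.le hεK (by norm_num : (0:ℝ) ≤ (3:ℝ)/16)
      rwa [← Real.rpow_mul hK0.le, (show (-(16:ℝ)/3 * (3/16)) = -1 by norm_num),
        Real.rpow_neg_one] at this
    calc K * ε ^ ((5:ℝ)/4) = ε ^ ((1:ℝ) + 1/16) * (K * ε ^ ((3:ℝ)/16)) := by
          rw [h8]; ring
      _ ≤ ε ^ ((1:ℝ) + 1/16) * (K * K⁻¹) := by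
          refine mul_le_mul_of_nonneg_left (mul_le_mul_of_nonneg_left h9 hK0.le)
            (Real.rpow_nonneg hε0.le _)
      _ = ε ^ ((1:ℝ) + 1/16) := by rw [mul_inv_cancel₀ hK0.ne', mul_one]
  exact hmain.trans hfin
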